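/- Causal quotient rule: if f, g : ℝ^ω → ℝ^ω are causally differentiable at σ and g(σ)_0 ≠ 0, then f/g := f × g^{-1} is causally differentiable at σ with derivative Δσ ↦ (D f(σ)(Δσ) × g(σ) + [-1] × f(σ) × D g(σ)(Δσ)) × (g(σ) × g(σ))^{-1}. -/

import Mathlib

/-- A stream function is *causal* if initial segments of length `k+1` of the
input determine initial segments of length `k+1` of the output. -/
def Causal {A B : Type*} (f : (ℕ → A) → (ℕ → B)) : Prop :=
  ∀ σ τ : ℕ → A, ∀ k : ℕ, (∀ i ≤ k, σ i = τ i) → ∀ i ≤ k, f σ i = f τ i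

/-- Extend a finite word to a stream (padding with the first letter). -/
def extW {A : Type*} {k : ℕ} (w : Fin (k+1) → A) : ℕ → A :=
  fun n => if h : n < k+1 then w ⟨n, h⟩ else w 0

/-- The `k`-th pointwise approximant (unrolling) of a causal function. -/
def U {A B : Type*} (f : (ℕ → A) → (ℕ → B)) (k : ℕ) (w : Fin (k+1) → A) : B :=
  f (extW w) k

/-- The `k`-th stringwise approximant (truncation) of a causal function. -/
def T {A B : Type*} (f : (ℕ → A) → (ℕ → B)) (k : ℕ) (w : Fin (k+1) → A) :
    Fin (k+1) → B := fun i => f (extW w) i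

/-- The initial segment `σ_{0:k}` of a stream, as a finite word. -/
def init {A : Type*} (σ : ℕ → A) (k : ℕ) : Fin (k+1) → A := fun i => σ i

/-- A causal function is differentiable at a stream `σ` when all of its
pointwise approximants are differentiable at `σ_{0:k}`. -/
def CausalDiffAt {E F : Type*} [NormedAddCommGroup E] [NormedSpace ℝ E]
    [NormedAddCommGroup F] [NormedSpace ℝ F]
    (f : (ℕ → E) → ℕ → F) (σ : ℕ → E) : Prop :=
  ∀ k, DifferentiableAt ℝ (U f k) (init σ k)

/-- `L` is the causal derivative of `f` at `σ`: the `k`-th pointwise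
approximant of `L` is the Jacobian of `U_k(f)` at `σ_{0:k}`. -/
def IsCausalDerivAt {E F : Type*} [NormedAddCommGroup E] [NormedSpace ℝ E]
    [NormedAddCommGroup F] [NormedSpace ℝ F]
    (f : (ℕ → E) → ℕ → F) (σ : ℕ → E) (L : (ℕ → E) → ℕ → F) : Prop :=
  ∀ (Δ : ℕ → E) (k : ℕ), L Δ k = fderiv ℝ (U f k) (init σ k) (init Δ k)

/-- The Cauchy product of two real streams. -/
def cauchy (σ τ : ℕ → ℝ) : ℕ → ℝ :=
  fun k => ∑ i ∈ Finset.range (k+1), σ i * τ (k - i)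

/-- The constant stream `[r] = (r, 0, 0, ...)`. -/
def streamConst (r : ℝ) : ℕ → ℝ := fun k => if k = 0 then r else 0

/-- The stream inverse for the Cauchy product, defined when `σ 0 ≠ 0`. -/
noncomputable def sinv (σ : ℕ → ℝ) : ℕ → ℝ
  | 0 => 1 / σ 0
  | k+1 => -(1 / σ 0) * ∑ i : Fin (k+1), σ (k + 1 - (i : ℕ)) * sinv σ i

namespace CQR

/-- restriction continuous linear map -/
noncomputable def res {k j : ℕ} (h : j ≤ k) : ((Fin (k+1) → ℝ)) →L[ℝ] (Fin (j+1) → ℝ) :=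
  ContinuousLinearMap.pi fun i => ContinuousLinearMap.proj (Fin.castLE (by omega) i)

@[simp] lemma res_apply {k j : ℕ} (h : j ≤ k) (w : Fin (k+1) → ℝ) (i : Fin (j+1)) :
    res h w i = w (Fin.castLE (by omega) i) := rfl

@[simp] lemma res_init {k j : ℕ} (h : j ≤ k) (σ : ℕ → ℝ) :
    res h (init σ k) = init σ j := by
  funext i; rfl

/-- causal evaluation -/
lemma eval_eq {f : (ℕ → ℝ) → ℕ → ℝ} (hf : Causal f) {k j : ℕ} (h : j ≤ k)
    (w : Fin (k+1) → ℝ) : f (extW w) j = U f j (res h w) := by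
  unfold U
  refine hf _ _ j ?_ j le_rfl
  intro i hi
  simp only [extW, res_apply]
  have hik : i < k + 1 := by omega
  have hij : i < j + 1 := by omega
  rw [dif_pos hik, dif_pos hij]
  rfl

lemma extW_init_eval {f : (ℕ → ℝ) → ℕ → ℝ} (hf : Causal f) (σ : ℕ → ℝ) {k i : ℕ}
    (hi : i ≤ k) : f (extW (init σ k)) i = f σ i := by
  refine hf _ _ k ?_ i hi
  intro m hm
  simp [extW, init, Nat.lt_succ_of_le hm]


/-- differentiability + derivative of a component `w ↦ f (extW w) j` -/
lemma comp_diff {f : (ℕ → ℝ) → ℕ → ℝ} (hf : Causal f) {σ : ℕ → ℝ}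
    (hdf : CausalDiffAt f σ) {k j : ℕ} (h : j ≤ k) :
    DifferentiableAt ℝ (fun w : Fin (k+1) → ℝ => f (extW w) j) (init σ k) := by
  have : (fun w : Fin (k+1) → ℝ => f (extW w) j) = (U f j) ∘ (res h) := by
    funext w; exact eval_eq hf h w
  rw [this]
  exact (by rw [res_init]; exact hdf j : DifferentiableAt ℝ (U f j) (res h (init σ k))).comp _
    (res h).differentiableAt

lemma comp_fderiv {f : (ℕ → ℝ) → ℕ → ℝ} (hf : Causal f) {σ : ℕ → ℝ}
    (hdf : CausalDiffAt f σ) {k j : ℕ} (h : j ≤ k) (Δ : ℕ → ℝ) :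
    fderiv ℝ (fun w : Fin (k+1) → ℝ => f (extW w) j) (init σ k) (init Δ k)
      = fderiv ℝ (U f j) (init σ j) (init Δ j) := by
  have hfun : (fun w : Fin (k+1) → ℝ => f (extW w) j) = (U f j) ∘ (res h) := by
    funext w; exact eval_eq hf h w
  rw [hfun]
  have h1 : DifferentiableAt ℝ (U f j) (res h (init σ k)) := by
    rw [res_init]; exact hdf j
  rw [fderiv_comp _ h1 (res h).differentiableAt]
  simp [res_init]


/-- sinv is local: depends only on the first entries -/
lemma sinv_local {τ τ' : ℕ → ℝ} {k : ℕ} (h : ∀ i ≤ k, τ i = τ' i) :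
    ∀ i ≤ k, sinv τ i = sinv τ' i := by
  intro i
  induction i using Nat.strong_induction_on with
  | _ i ih =>
    intro hik
    match i with
    | 0 => simp [sinv, h 0 (by omega)]
    | m+1 =>
      simp only [sinv]
      rw [h 0 (by omega)]
      congr 1
      apply Finset.sum_congr rfl
      intro b _
      rw [h (m+1-(b:ℕ)) (by omega), ih b (b.isLt) (by omega)]

lemma causal_quot {f g : (ℕ → ℝ) → ℕ → ℝ} (hf : Causal f) (hg : Causal g) :
    Causal (fun ρ => cauchy (f ρ) (sinv (g ρ))) := by
  intro σ τ k hagree i hik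
  simp only [cauchy]
  apply Finset.sum_congr rfl
  intro b hb
  rw [Finset.mem_range] at hb
  rw [hf σ τ k hagree b (by omega),
    sinv_local (k := i) (fun m hm => hg σ τ k hagree m (by omega)) (i - b) (by omega)]

/-- differentiability of sinv components -/
lemma sinv_comp_diff {g : (ℕ → ℝ) → ℕ → ℝ} (hg : Causal g) {σ : ℕ → ℝ}
    (hdg : CausalDiffAt g σ) (hg0 : g σ 0 ≠ 0) {k : ℕ} :
    ∀ j ≤ k, DifferentiableAt ℝ (fun w : Fin (k+1) → ℝ => sinv (g (extW w)) j) (init σ k) := by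
  intro j
  induction j using Nat.strong_induction_on with
  | _ j ih =>
    intro hjk
    have h0 : DifferentiableAt ℝ (fun w : Fin (k+1) → ℝ => g (extW w) 0) (init σ k) :=
      comp_diff hg hdg (by omega)
    have hne : g (extW (init σ k)) 0 ≠ 0 := by
      rw [extW_init_eval hg σ (by omega)]; exact hg0
    match j with
    | 0 =>
      simp only [sinv, one_div]
      exact h0.inv hne
    | m+1 =>
      simp only [sinv]
      apply DifferentiableAt.mul
      · simp only [one_div]
        exact (h0.inv hne).neg
      · apply DifferentiableAt.fun_sum
        intro b _
        exact (comp_diff hg hdg (by omega : m+1-(b:ℕ) ≤ k)).mul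
          (ih b (by omega) (by omega))


lemma quot_diffAt {f g : (ℕ → ℝ) → ℕ → ℝ} (hf : Causal f) (hg : Causal g) {σ : ℕ → ℝ}
    (hdf : CausalDiffAt f σ) (hdg : CausalDiffAt g σ) (hg0 : g σ 0 ≠ 0) :
    CausalDiffAt (fun ρ => cauchy (f ρ) (sinv (g ρ))) σ := by
  intro k
  have : U (fun ρ => cauchy (f ρ) (sinv (g ρ))) k =
      fun w => ∑ i ∈ Finset.range (k+1), f (extW w) i * sinv (g (extW w)) (k - i) := rfl
  rw [this]
  apply DifferentiableAt.fun_sum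
  intro i hi
  rw [Finset.mem_range] at hi
  exact (comp_diff hf hdf (by omega)).mul
    (sinv_comp_diff hg hdg hg0 (k - i) (by omega))

/-- product rule: value of the canonical derivative -/
lemma prod_fderiv {f g : (ℕ → ℝ) → ℕ → ℝ} (hf : Causal f) (hg : Causal g) {σ : ℕ → ℝ}
    (hdf : CausalDiffAt f σ) (hdg : CausalDiffAt g σ) (Δ : ℕ → ℝ) (k : ℕ) :
    fderiv ℝ (U (fun ρ => cauchy (f ρ) (g ρ)) k) (init σ k) (init Δ k) =
      ∑ i ∈ Finset.range (k+1),
        (fderiv ℝ (U f i) (init σ i) (init Δ i) * g σ (k - i)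
          + f σ i * fderiv ℝ (U g (k - i)) (init σ (k - i)) (init Δ (k - i))) := by
  have hrw : U (fun ρ => cauchy (f ρ) (g ρ)) k =
      fun w => ∑ i ∈ Finset.range (k+1), f (extW w) i * g (extW w) (k - i) := rfl
  have hdiff : ∀ i ∈ Finset.range (k+1), DifferentiableAt ℝ
      (fun w : Fin (k+1) → ℝ => f (extW w) i * g (extW w) (k - i)) (init σ k) := by
    intro i hi
    rw [Finset.mem_range] at hi
    exact (comp_diff hf hdf (by omega)).mul (comp_diff hg hdg (by omega))
  rw [hrw, fderiv_fun_sum hdiff]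
  rw [ContinuousLinearMap.sum_apply]
  apply Finset.sum_congr rfl
  intro i hi
  rw [Finset.mem_range] at hi
  have h1 : i ≤ k := by omega
  have h2 : k - i ≤ k := by omega
  rw [fderiv_fun_mul (comp_diff hf hdf h1) (comp_diff hg hdg h2)]
  simp only [ContinuousLinearMap.add_apply, ContinuousLinearMap.smul_apply,
    smul_eq_mul]
  rw [comp_fderiv hf hdf h1 Δ, comp_fderiv hg hdg h2 Δ,
    extW_init_eval hf σ h1, extW_init_eval hg σ h2]
  ring


noncomputable def toPS (a : ℕ → ℝ) : PowerSeries ℝ := PowerSeries.mk a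

@[simp] lemma coeff_toPS (a : ℕ → ℝ) (n : ℕ) :
    PowerSeries.coeff n (toPS a) = a n := PowerSeries.coeff_mk n a

lemma toPS_cauchy (a b : ℕ → ℝ) : toPS (cauchy a b) = toPS a * toPS b := by
  ext n
  rw [PowerSeries.coeff_mul, coeff_toPS,
    Finset.Nat.sum_antidiagonal_eq_sum_range_succ_mk]
  simp [cauchy]

lemma toPS_add (a b : ℕ → ℝ) : toPS (a + b) = toPS a + toPS b := by
  ext n; simp [toPS]

lemma toPS_streamConst (r : ℝ) : toPS (streamConst r) = PowerSeries.C r := by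
  ext n
  simp [streamConst, PowerSeries.coeff_C]

lemma sinv_succ (a : ℕ → ℝ) (m : ℕ) :
    sinv a (m+1) = -(1/a 0) * ∑ i ∈ Finset.range (m+1), a (m+1-i) * sinv a i := by
  rw [show sinv a (m+1) = -(1 / a 0) * ∑ i : Fin (m+1), a (m + 1 - (i:ℕ)) * sinv a (i:ℕ)
    from by simp [sinv]]
  rw [Fin.sum_univ_eq_sum_range (fun i => a (m + 1 - i) * sinv a i)]

lemma toPS_sinv_mul {a : ℕ → ℝ} (ha : a 0 ≠ 0) : toPS a * toPS (sinv a) = 1 := by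
  ext n
  rw [PowerSeries.coeff_mul, Finset.Nat.sum_antidiagonal_eq_sum_range_succ_mk]
  simp only [coeff_toPS]
  match n with
  | 0 =>
    simp [sinv, PowerSeries.coeff_one]
    field_simp
  | m+1 =>
    rw [PowerSeries.coeff_one]
    simp only [Nat.succ_ne_zero, if_false]
    rw [Finset.sum_range_succ']
    simp only [Nat.sub_zero]
    have hrefl : ∑ i ∈ Finset.range (m+1), a (i+1) * sinv a (m+1-(i+1))
        = ∑ i ∈ Finset.range (m+1), a (m+1-i) * sinv a i := by
      have : ∑ i ∈ Finset.range (m+1), a (m+1-i) * sinv a i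
          = ∑ i ∈ Finset.range (m+1),
              (fun j => a (j+1) * sinv a (m+1-(j+1))) (m+1-1-i) := by
        apply Finset.sum_congr rfl
        intro j hj
        rw [Finset.mem_range] at hj
        simp only []
        congr 2 <;> omega
      rw [this]
      exact (Finset.sum_range_reflect _ _).symm
    rw [hrefl, sinv_succ]
    field_simp
    ring


lemma quot_cancel {F G : ℕ → ℝ} (hG : G 0 ≠ 0) :
    cauchy (cauchy F (sinv G)) G = F := by
  have hps : toPS (cauchy (cauchy F (sinv G)) G) = toPS F := by
    rw [toPS_cauchy, toPS_cauchy, mul_assoc, mul_comm (toPS (sinv G)),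
      toPS_sinv_mul hG, mul_one]
  funext k
  have := congrArg (PowerSeries.coeff k) hps
  simpa using this

lemma ev_eq {f g : (ℕ → ℝ) → ℕ → ℝ} (hg : Causal g) {σ : ℕ → ℝ}
    (hdg : CausalDiffAt g σ) (hg0 : g σ 0 ≠ 0) (k : ℕ) :
    (U (fun ρ => cauchy (cauchy (f ρ) (sinv (g ρ))) (g ρ)) k)
      =ᶠ[nhds (init σ k)] U f k := by
  have hc : ContinuousAt (fun w : Fin (k+1) → ℝ => g (extW w) 0) (init σ k) :=
    (comp_diff hg hdg (Nat.zero_le k)).continuousAt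
  have hne : g (extW (init σ k)) 0 ≠ 0 := by
    rw [extW_init_eval hg σ (Nat.zero_le k)]; exact hg0
  filter_upwards [hc.eventually_ne hne] with w hw
  show cauchy (cauchy (f (extW w)) (sinv (g (extW w)))) (g (extW w)) k = f (extW w) k
  rw [quot_cancel hw]

/-- The main derivative identity. -/
lemma main_identity {f g : (ℕ → ℝ) → ℕ → ℝ} (hf : Causal f) (hg : Causal g)
    {σ : ℕ → ℝ} {Df Dg : (ℕ → ℝ) → ℕ → ℝ}
    (hdf : CausalDiffAt f σ) (hdg : CausalDiffAt g σ)
    (hDf : IsCausalDerivAt f σ Df) (hDg : IsCausalDerivAt g σ Dg)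
    (hg0 : g σ 0 ≠ 0) (Δ : ℕ → ℝ) (k : ℕ) :
    fderiv ℝ (U (fun ρ => cauchy (f ρ) (sinv (g ρ))) k) (init σ k) (init Δ k) =
      cauchy
        (cauchy (Df Δ) (g σ) +
          cauchy (cauchy (streamConst (-1)) (f σ)) (Dg Δ))
        (sinv (cauchy (g σ) (g σ))) k := by
  set h : (ℕ → ℝ) → ℕ → ℝ := fun ρ => cauchy (f ρ) (sinv (g ρ)) with hh
  have hch : Causal h := causal_quot hf hg
  have hdh : CausalDiffAt h σ := quot_diffAt hf hg hdf hdg hg0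
  set Dh : (ℕ → ℝ) → ℕ → ℝ :=
    fun Δ i => fderiv ℝ (U h i) (init σ i) (init Δ i) with hDh
  -- step 1 + 2 : product rule applied to h·g = f
  have step : ∀ m : ℕ, cauchy (Dh Δ) (g σ) m + cauchy (h σ) (Dg Δ) m = Df Δ m := by
    intro m
    have hp := prod_fderiv hch hg hdh hdg Δ m
    have hev := Filter.EventuallyEq.fderiv_eq (𝕜 := ℝ) (ev_eq (f := f) hg hdg hg0 m)
    rw [hev] at hp
    have h2 : cauchy (h σ) (Dg Δ) m = ∑ i ∈ Finset.range (m+1),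
        h σ i * fderiv ℝ (U g (m-i)) (init σ (m-i)) (init Δ (m-i)) := by
      apply Finset.sum_congr rfl
      intro i hi
      rw [← hDg Δ (m-i)]
    rw [hDf Δ m, hp, Finset.sum_add_distrib, h2]
    rfl
  -- power series algebra
  set A := toPS (Df Δ)
  set B := toPS (Dg Δ)
  set F := toPS (f σ)
  set G := toPS (g σ)
  set Gi := toPS (sinv (g σ))
  set X := toPS (Dh Δ)
  set Q := toPS (sinv (cauchy (g σ) (g σ)))
  have hGGi : G * Gi = 1 := toPS_sinv_mul hg0
  have hgg0 : cauchy (g σ) (g σ) 0 ≠ 0 := by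
    simpa [cauchy] using mul_ne_zero hg0 hg0
  have hGG : (G * G) * Q = 1 := by
    rw [show G * G = toPS (cauchy (g σ) (g σ)) from (toPS_cauchy _ _).symm]
    exact toPS_sinv_mul hgg0
  have hQ : Q = Gi * Gi := by
    have h2 : (G * G) * (Gi * Gi) = 1 := by
      rw [show (G*G)*(Gi*Gi) = (G*Gi)*(G*Gi) by ring, hGGi, one_mul]
    calc Q = ((G*G) * (Gi*Gi)) * Q := by rw [h2, one_mul]
    _ = ((G*G)*Q) * (Gi*Gi) := by ring
    _ = Gi*Gi := by rw [hGG, one_mul]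
  have eq1 : X * G + (F * Gi) * B = A := by
    have : toPS (cauchy (Dh Δ) (g σ)) + toPS (cauchy (h σ) (Dg Δ)) = toPS (Df Δ) := by
      ext m
      simp only [map_add, coeff_toPS]
      exact step m
    rw [toPS_cauchy, toPS_cauchy] at this
    have hhs : toPS (h σ) = F * Gi := toPS_cauchy _ _
    rw [hhs] at this
    exact this
  have hGne : G ≠ 0 := by
    intro h0
    rw [h0, zero_mul] at hGGi
    exact one_ne_zero hGGi.symm
  have hX : X = (A - F * Gi * B) * Gi := by
    have h3 : X * (G * Gi) = (A - F * Gi * B) * Gi := by linear_combination Gi * eq1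
    rwa [hGGi, mul_one] at h3
  have hC : (PowerSeries.C (-1) : PowerSeries ℝ) = -1 := by
    rw [map_neg, map_one]
  have key : X = (A * G + ((PowerSeries.C (-1)) * F) * B) * Q := by
    rw [hQ, hC, hX]
    linear_combination (-A * Gi) * hGGi
  -- extract coefficient k
  have := congrArg (PowerSeries.coeff k) key
  rw [show (A * G + ((PowerSeries.C (-1)) * F) * B) * Q =
      toPS (cauchy (cauchy (Df Δ) (g σ) +
        cauchy (cauchy (streamConst (-1)) (f σ)) (Dg Δ)) (sinv (cauchy (g σ) (g σ))))
    from by rw [toPS_cauchy, toPS_add, toPS_cauchy, toPS_cauchy, toPS_cauchy,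
      toPS_streamConst]] at this
  simp only [coeff_toPS] at this
  rw [show (PowerSeries.coeff k) X = Dh Δ k from coeff_toPS _ _] at this
  exact this

end CQR


/-- Causal quotient rule. -/
theorem causal_quotient_rule (f g : (ℕ → ℝ) → ℕ → ℝ)
    (hf : Causal f) (hg : Causal g) (σ : ℕ → ℝ) (Df Dg : _)
    (hdf : CausalDiffAt f σ) (hdg : CausalDiffAt g σ)
    (hDf : IsCausalDerivAt f σ Df) (hDg : IsCausalDerivAt g σ Dg)
    (hg0 : g σ 0 ≠ 0) :
    CausalDiffAt (fun ρ => cauchy (f ρ) (sinv (g ρ))) σ ∧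
    IsCausalDerivAt (fun ρ => cauchy (f ρ) (sinv (g ρ))) σ (fun Δ =>
      cauchy
        (cauchy (Df Δ) (g σ) +
          cauchy (cauchy (streamConst (-1)) (f σ)) (Dg Δ))
        (sinv (cauchy (g σ) (g σ)))) := by
  refine ⟨CQR.quot_diffAt hf hg hdf hdg hg0, ?_⟩
  intro Δ k
  exact (CQR.main_identity hf hg hdf hdg hDf hDg hg0 Δ k).symm
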